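/- Let P and Q be orthogonal projections on a complex Hilbert space such that PQP = QPQ. Then PQ = QP. -/
import Mathlib

open ContinuousLinearMap in
lemma davies_aux {H : Type*} [NormedAddCommGroup H] [InnerProductSpace ℂ H]
    [CompleteSpace H] (P Q : H →L[ℂ] H)
    (hPsa : ContinuousLinearMap.adjoint P = P) (hPidem : P * P = P)
    (hQsa : ContinuousLinearMap.adjoint Q = Q) (hQidem : Q * Q = Q)
    (h : P * Q * P = Q * P * Q) :
    P * Q = P * Q * P := by
  have hPs : star P = P := hPsa
  have hQs : star Q = Q := hQsa
  have a : (Q * P) * (P * Q) = Q * P * Q := by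
    rw [show (Q * P) * (P * Q) = Q * (P * P) * Q by noncomm_ring, hPidem]
  have b : (Q * P) * (P * Q * P) = Q * P * Q := by
    rw [show (Q * P) * (P * Q * P) = Q * (P * P) * Q * P by noncomm_ring, hPidem, ← h,
        show P * Q * P * P = P * Q * (P * P) by noncomm_ring, hPidem, h]
  have c : (P * Q * P) * (P * Q) = Q * P * Q := by
    rw [show (P * Q * P) * (P * Q) = P * Q * (P * P) * Q by noncomm_ring, hPidem,
        show P * Q * P * Q = (P * Q * P) * Q by noncomm_ring, h,
        show (Q * P * Q) * Q = Q * P * (Q * Q) by noncomm_ring, hQidem]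
  have d : (P * Q * P) * (P * Q * P) = Q * P * Q := by
    rw [show (P * Q * P) * (P * Q * P) = P * Q * (P * P) * Q * P by noncomm_ring, hPidem,
        show P * Q * P * Q * P = P * (Q * P * Q) * P by noncomm_ring, ← h,
        show P * (P * Q * P) * P = (P * P) * Q * (P * P) by noncomm_ring, hPidem, h]
  have key : star (P * Q - P * Q * P) * (P * Q - P * Q * P) = 0 := by
    have hsd : star (P * Q - P * Q * P) = Q * P - P * Q * P := by
      simp [star_sub, star_mul, hPs, hQs, mul_assoc]
    rw [hsd, sub_mul, mul_sub, mul_sub, a, b, c, d]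
    abel
  have := (CStarRing.star_mul_self_eq_zero_iff _).mp key
  exact sub_eq_zero.mp this

/-- Davies: if `PQP = QPQ` for orthogonal projections `P`, `Q` on a complex
Hilbert space, then `PQ = QP`. -/
theorem davies_commute {H : Type*} [NormedAddCommGroup H] [InnerProductSpace ℂ H]
    [CompleteSpace H] (P Q : H →L[ℂ] H)
    (hPsa : ContinuousLinearMap.adjoint P = P) (hPidem : P * P = P)
    (hQsa : ContinuousLinearMap.adjoint Q = Q) (hQidem : Q * Q = Q)
    (h : P * Q * P = Q * P * Q) :
    P * Q = Q * P := by
  have h1 := davies_aux P Q hPsa hPidem hQsa hQidem h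
  have h2 := davies_aux Q P hQsa hQidem hPsa hPidem h.symm
  rw [h1, h, ← h2]
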